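/- Zygmund-type oscillatory integral lemma: Let F: [a,b] → B be a C² function with values in a Banach space B, with F(a) = F(b) = 0, F'' ∈ L¹(a+δ, b-δ; B) for every δ > 0, and suppose there is p ∈ (0,1) such that ‖F''(a+ζ)‖ and ‖F''(b-ζ)‖ are O(ζ^{p-2}) as ζ ↓ 0. Then I(t) = ∫_a^b e^{-itν} F(ν) dν satisfies ‖I(t)‖ = O(t^{-1-p}) as t → ∞. -/

import Mathlib

set_option maxHeartbeats 2000000

open Set MeasureTheory intervalIntegral

lemma zyg_edge {B : Type*} [NormedAddCommGroup B] [NormedSpace ℝ B] [CompleteSpace B]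
    (L p K : ℝ) (hL : 0 < L) (hp : p ∈ Set.Ioo (0:ℝ) 1) (hK : 0 ≤ K)
    (g g1 g2 : ℝ → B)
    (hgc : ContinuousOn g (Set.Icc 0 L))
    (hg0 : g 0 = 0)
    (hg1 : ∀ x ∈ Set.Ioo (0:ℝ) L, HasDerivAt g (g1 x) x)
    (hg1c : ContinuousOn g1 (Set.Ioo 0 L))
    (hg2 : ∀ x ∈ Set.Ioo (0:ℝ) L, HasDerivAt g1 (g2 x) x)
    (hg2c : ContinuousOn g2 (Set.Ioo 0 L))
    (hg2b : ∀ x ∈ Set.Ioo (0:ℝ) (L/2), ‖g2 x‖ ≤ K * x ^ (p - 2)) :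
    ∃ C, 0 ≤ C ∧ ∀ ζ ∈ Set.Ioc (0:ℝ) (L/4),
      ‖g ζ‖ ≤ C * ζ ^ p ∧ ‖g1 ζ‖ ≤ C * ζ ^ (p-1) ∧
      (∫ s in ζ..(L/4), ‖g2 s‖) ≤ C * ζ ^ (p-1) := by
  obtain ⟨hp0, hp1⟩ := hp
  set q : ℝ := L/4 with hqdef
  have hq0 : 0 < q := by positivity
  have hqL2 : q < L/2 := by simp only [hqdef]; linarith
  have hqL : q < L := by simp only [hqdef]; linarith
  have h1p : 0 < 1 - p := by linarith
  -- subset facts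
  have hsub : ∀ ζ, 0 < ζ → ζ ≤ q → Set.Icc ζ q ⊆ Set.Ioo 0 (L/2) := by
    intro ζ h0 hq s hs
    exact ⟨lt_of_lt_of_le h0 hs.1, lt_of_le_of_lt hs.2 hqL2⟩
  have hsubL : Set.Ioo (0:ℝ) (L/2) ⊆ Set.Ioo 0 L := by
    intro s hs; exact ⟨hs.1, by linarith [hs.2]⟩
  -- Step A : the integral bound
  have hA : ∀ ζ ∈ Set.Ioc (0:ℝ) q, (∫ s in ζ..q, ‖g2 s‖) ≤ (K/(1-p)) * ζ ^ (p-1) := by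
    rintro ζ ⟨hζ0, hζq⟩
    have hss := hsub ζ hζ0 hζq
    have hint1 : IntervalIntegrable (fun s => ‖g2 s‖) volume ζ q := by
      apply ContinuousOn.intervalIntegrable
      rw [Set.uIcc_of_le hζq]
      exact ((hg2c.mono (fun s hs => hsubL (hss hs)))).norm
    have hint2 : IntervalIntegrable (fun s => K * s ^ (p-2)) volume ζ q := by
      apply ContinuousOn.intervalIntegrable
      rw [Set.uIcc_of_le hζq]
      exact continuousOn_const.mul (continuousOn_id.rpow_const
        (fun s hs => Or.inl (ne_of_gt (hss hs).1)))
    have hmono := intervalIntegral.integral_mono_on hζq hint1 hint2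
      (fun s hs => hg2b s (hss hs))
    have hcomp : (∫ s in ζ..q, K * s ^ (p-2)) = K * ((q ^ (p-1) - ζ ^ (p-1))/(p-1)) := by
      rw [intervalIntegral.integral_const_mul, integral_rpow]
      · rw [show p - 2 + 1 = p - 1 by ring]
      · exact Or.inr ⟨by intro h; linarith, by
          rw [Set.uIcc_of_le hζq]; rintro ⟨h1, -⟩; linarith⟩
    rw [hcomp] at hmono
    refine hmono.trans ?_
    have hqnn : (0:ℝ) ≤ q ^ (p-1) := Real.rpow_nonneg hq0.le _
    have heq : (q ^ (p-1) - ζ ^ (p-1))/(p-1) = (ζ ^ (p-1) - q ^ (p-1))/(1-p) := by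
      rw [div_eq_div_iff (by linarith) (by linarith)]; ring
    rw [heq]
    calc K * ((ζ ^ (p-1) - q ^ (p-1))/(1-p)) ≤ K * (ζ ^ (p-1)/(1-p)) := by
          gcongr
          linarith
      _ = K/(1-p) * ζ ^ (p-1) := by ring
    -- Step B : the g1 bound
  have hqmem : q ∈ Set.Ioo (0:ℝ) L := ⟨hq0, hqL⟩
  set C1 : ℝ := ‖g1 q‖ * q ^ (1-p) + K/(1-p) with hC1def
  have hC1nn : 0 ≤ C1 := by
    have : (0:ℝ) ≤ ‖g1 q‖ * q ^ (1-p) := by positivity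
    have : (0:ℝ) ≤ K/(1-p) := by positivity
    simp only [hC1def]; positivity
  have hB : ∀ ζ ∈ Set.Ioc (0:ℝ) q, ‖g1 ζ‖ ≤ C1 * ζ ^ (p-1) := by
    rintro ζ ⟨hζ0, hζq⟩
    have hss := hsub ζ hζ0 hζq
    have hss' : Set.Icc ζ q ⊆ Set.Ioo 0 L := fun s hs => hsubL (hss hs)
    have hint : IntervalIntegrable g2 volume ζ q := by
      apply ContinuousOn.intervalIntegrable
      rw [Set.uIcc_of_le hζq]
      exact hg2c.mono hss'
    have hfc : (∫ s in ζ..q, g2 s) = g1 q - g1 ζ := by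
      apply intervalIntegral.integral_eq_sub_of_hasDerivAt _ hint
      intro x hx
      rw [Set.uIcc_of_le hζq] at hx
      exact hg2 x (hss' hx)
    have h1 : ‖g1 ζ‖ ≤ ‖g1 q‖ + ‖∫ s in ζ..q, g2 s‖ := by
      have : g1 ζ = g1 q - ∫ s in ζ..q, g2 s := by rw [hfc]; abel
      rw [this]
      exact norm_sub_le _ _
    have h2 : ‖∫ s in ζ..q, g2 s‖ ≤ (K/(1-p)) * ζ ^ (p-1) :=
      (intervalIntegral.norm_integral_le_integral_norm hζq).trans (hA ζ ⟨hζ0, hζq⟩)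
    have h3 : ‖g1 q‖ ≤ (‖g1 q‖ * q ^ (1-p)) * ζ ^ (p-1) := by
      have hle : q ^ (p-1) ≤ ζ ^ (p-1) :=
        Real.rpow_le_rpow_of_nonpos hζ0 hζq (by linarith)
      have hmul : q ^ (1-p) * q ^ (p-1) = 1 := by
        rw [← Real.rpow_add hq0]; norm_num
      calc ‖g1 q‖ = ‖g1 q‖ * (q ^ (1-p) * q ^ (p-1)) := by rw [hmul, mul_one]
        _ = (‖g1 q‖ * q ^ (1-p)) * q ^ (p-1) := by ring
        _ ≤ (‖g1 q‖ * q ^ (1-p)) * ζ ^ (p-1) := by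
            apply mul_le_mul_of_nonneg_left hle (by positivity)
    calc ‖g1 ζ‖ ≤ ‖g1 q‖ + ‖∫ s in ζ..q, g2 s‖ := h1
      _ ≤ (‖g1 q‖ * q ^ (1-p)) * ζ ^ (p-1) + (K/(1-p)) * ζ ^ (p-1) := add_le_add h3 h2
      _ = C1 * ζ ^ (p-1) := by rw [hC1def]; ring
  -- Step C : the g bound
  have hC : ∀ ζ ∈ Set.Ioc (0:ℝ) q, ‖g ζ‖ ≤ (C1/p) * ζ ^ p := by
    rintro ζ ⟨hζ0, hζq⟩
    have hζL : ζ < L := lt_of_le_of_lt hζq hqL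
    have hbnd : IntervalIntegrable (fun s => C1 * s ^ (p-1)) volume 0 ζ :=
      (intervalIntegral.intervalIntegrable_rpow' (by linarith)).const_mul C1
    have hintg1 : IntervalIntegrable g1 volume 0 ζ := by
      rw [intervalIntegrable_iff_integrableOn_Ioc_of_le hζ0.le]
      apply Integrable.mono' (g := fun s => C1 * s ^ (p-1))
      · rw [intervalIntegrable_iff_integrableOn_Ioc_of_le hζ0.le] at hbnd
        exact hbnd
      · exact (hg1c.mono (fun s hs => ⟨hs.1, lt_of_le_of_lt hs.2 hζL⟩)).aestronglyMeasurable
          measurableSet_Ioc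
      · refine (ae_restrict_mem measurableSet_Ioc).mono (fun s hs => ?_)
        exact hB s ⟨hs.1, hs.2.trans hζq⟩
    have hfc : (∫ s in (0:ℝ)..ζ, g1 s) = g ζ - g 0 := by
      apply intervalIntegral.integral_eq_sub_of_hasDeriv_right_of_le hζ0.le
        (hgc.mono (Set.Icc_subset_Icc le_rfl hζL.le))
        (fun x hx => (hg1 x ⟨hx.1, hx.2.trans hζL⟩).hasDerivWithinAt) hintg1
    have hnorm : ‖g ζ‖ = ‖∫ s in (0:ℝ)..ζ, g1 s‖ := by rw [hfc, hg0, sub_zero]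
    have hle : ‖∫ s in (0:ℝ)..ζ, g1 s‖ ≤ |∫ s in (0:ℝ)..ζ, C1 * s ^ (p-1)| := by
      apply intervalIntegral.norm_integral_le_abs_of_norm_le _ hbnd
      rw [Set.uIoc_of_le hζ0.le]
      refine (ae_restrict_mem measurableSet_Ioc).mono (fun s hs => ?_)
      exact hB s ⟨hs.1, hs.2.trans hζq⟩
    have hcomp : (∫ s in (0:ℝ)..ζ, C1 * s ^ (p-1)) = C1/p * ζ ^ p := by
      rw [intervalIntegral.integral_const_mul, integral_rpow (Or.inl (by linarith))]
      rw [show p - 1 + 1 = p by ring, Real.zero_rpow (ne_of_gt hp0)]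
      ring
    rw [hnorm]
    refine hle.trans ?_
    rw [hcomp, abs_of_nonneg (by positivity)]
  -- assemble
  clear_value C1
  refine ⟨C1/p + C1 + K/(1-p), by positivity, ?_⟩
  rintro ζ hζ
  have hg1b := hB ζ hζ
  have hgb := hC ζ hζ
  have hib := hA ζ hζ
  have hζp : (0:ℝ) ≤ ζ ^ p := Real.rpow_nonneg hζ.1.le _
  have hζp1 : (0:ℝ) ≤ ζ ^ (p-1) := Real.rpow_nonneg hζ.1.le _
  have hKp : (0:ℝ) ≤ K/(1-p) := by positivity
  have hC1p : (0:ℝ) ≤ C1/p := by positivity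
  exact ⟨hgb.trans (mul_le_mul_of_nonneg_right (by linarith) hζp),
    hg1b.trans (mul_le_mul_of_nonneg_right (by linarith) hζp1),
    hib.trans (mul_le_mul_of_nonneg_right (by linarith) hζp1)⟩


/-- Zygmund-type oscillatory integral lemma (Jensen–Kato): if F : [a,b] → B
vanishes at the endpoints, is C² inside, F'' is integrable away from the
endpoints, and ‖F''‖ = O(ζ^{p-2}) at distance ζ from the endpoints for some
p ∈ (0,1), then ∫_a^b e^{-itν}F(ν)dν = O(t^{-1-p}) as t → ∞. -/
theorem zygmund_oscillatory_decay {B : Type*} [NormedAddCommGroup B]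
    [NormedSpace ℂ B] [CompleteSpace B]
    (a b : ℝ) (hab : a < b) (F : ℝ → B) (p : ℝ) (hp : p ∈ Set.Ioo (0:ℝ) 1)
    (hcont : ContinuousOn F (Set.Icc a b))
    (hF : ContDiffOn ℝ 2 F (Set.Ioo a b))
    (hFa : F a = 0) (hFb : F b = 0)
    (hInt : ∀ δ > (0:ℝ),
        MeasureTheory.IntegrableOn (iteratedDeriv 2 F) (Set.Icc (a + δ) (b - δ)))
    (hEdge : ∃ K : ℝ, ∀ ζ ∈ Set.Ioo (0:ℝ) ((b - a) / 2),
        ‖iteratedDeriv 2 F (a + ζ)‖ ≤ K * ζ ^ (p - 2) ∧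
        ‖iteratedDeriv 2 F (b - ζ)‖ ≤ K * ζ ^ (p - 2)) :
    ∃ M : ℝ, ∀ t ≥ (1:ℝ),
      ‖∫ ν in a..b, Complex.exp (-(t * ν) * Complex.I) • F ν‖ ≤ M * t ^ (-(1 + p)) := by
  obtain ⟨hp0, hp1⟩ := hp
  obtain ⟨K₀, hE⟩ := hEdge
  set L : ℝ := b - a with hLdef
  clear_value L
  have hL : 0 < L := by simp only [hLdef]; linarith
  -- K₀ is nonnegative
  have hK0 : 0 ≤ K₀ := by
    have hKx := (hE (L/4) ⟨by positivity, by simp only [hLdef]; linarith⟩).1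
    have h1 := (norm_nonneg (iteratedDeriv 2 F (a + L/4))).trans hKx
    have h2 : (0:ℝ) < (L/4) ^ (p-2) := Real.rpow_pos_of_pos (by positivity) _
    by_contra h
    push_neg at h
    nlinarith
  -- derivative infrastructure
  have h2eq : iteratedDeriv 2 F = deriv (deriv F) := by
    rw [show (2:ℕ) = 1 + 1 from rfl, iteratedDeriv_succ, iteratedDeriv_one]
  have hd1 : ∀ x ∈ Set.Ioo a b, HasDerivAt F (deriv F x) x := by
    intro x hx
    exact ((hF.differentiableOn (by norm_num)).differentiableAt
      (isOpen_Ioo.mem_nhds hx)).hasDerivAt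
  have hF' : ContDiffOn ℝ 1 (deriv F) (Set.Ioo a b) :=
    hF.deriv_of_isOpen isOpen_Ioo (by norm_num)
  have hd2 : ∀ x ∈ Set.Ioo a b, HasDerivAt (deriv F) (iteratedDeriv 2 F x) x := by
    intro x hx
    rw [h2eq]
    exact ((hF'.differentiableOn (by norm_num)).differentiableAt (isOpen_Ioo.mem_nhds hx)).hasDerivAt
  have hc1 : ContinuousOn (deriv F) (Set.Ioo a b) :=
    hF.continuousOn_deriv_of_isOpen isOpen_Ioo (by norm_num)
  have hc2 : ContinuousOn (iteratedDeriv 2 F) (Set.Ioo a b) := by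
    rw [h2eq]; exact hF'.continuousOn_deriv_of_isOpen isOpen_Ioo le_rfl
  -- maps
  have hmapsa : ∀ x ∈ Set.Ioo (0:ℝ) L, a + x ∈ Set.Ioo a b := by
    rintro x ⟨h1, h2⟩
    rw [hLdef] at h2
    exact ⟨by linarith, by linarith⟩
  have hmapsb : ∀ x ∈ Set.Ioo (0:ℝ) L, b - x ∈ Set.Ioo a b := by
    rintro x ⟨h1, h2⟩
    rw [hLdef] at h2
    exact ⟨by linarith, by linarith⟩
  have hcont_add : Continuous (fun s : ℝ => a + s) := continuous_const.add continuous_id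
  have hcont_sub : Continuous (fun s : ℝ => b - s) := continuous_const.sub continuous_id
  -- helper for a-side
  obtain ⟨Ca, hCa0, hCa⟩ := zyg_edge L p K₀ hL ⟨hp0, hp1⟩ hK0
    (fun s => F (a + s)) (fun s => deriv F (a + s)) (fun s => iteratedDeriv 2 F (a + s))
    (hcont.comp hcont_add.continuousOn (by
      rintro s ⟨h1, h2⟩; rw [hLdef] at h2; exact ⟨by linarith, by linarith⟩))
    (by simpa using hFa)
    (by
      intro x hx
      have h := (hd1 _ (hmapsa x hx)).scomp_of_eq x ((hasDerivAt_id x).const_add a) rfl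
      simpa [Function.comp_def] using h)
    (hc1.comp hcont_add.continuousOn hmapsa)
    (by
      intro x hx
      have h := (hd2 _ (hmapsa x hx)).scomp_of_eq x ((hasDerivAt_id x).const_add a) rfl
      simpa [Function.comp_def] using h)
    (hc2.comp hcont_add.continuousOn hmapsa)
    (fun x hx => (hE x hx).1)
  -- helper for b-side
  obtain ⟨Cb, hCb0, hCb⟩ := zyg_edge L p K₀ hL ⟨hp0, hp1⟩ hK0
    (fun s => F (b - s)) (fun s => -deriv F (b - s)) (fun s => iteratedDeriv 2 F (b - s))
    (hcont.comp hcont_sub.continuousOn (by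
      rintro s ⟨h1, h2⟩; rw [hLdef] at h2; exact ⟨by linarith, by linarith⟩))
    (by simpa using hFb)
    (by
      intro x hx
      have h := (hd1 _ (hmapsb x hx)).scomp_of_eq x ((hasDerivAt_id x).const_sub b) rfl
      simpa [Function.comp_def] using h)
    ((hc1.comp hcont_sub.continuousOn hmapsb).neg)
    (by
      intro x hx
      have h := ((hd2 _ (hmapsb x hx)).scomp_of_eq x ((hasDerivAt_id x).const_sub b) rfl).neg
      simpa [Function.comp_def, Pi.neg_def] using h)
    (hc2.comp hcont_sub.continuousOn hmapsb)
    (fun x hx => (hE x hx).2)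
    -- constants
  set q : ℝ := L / 4 with hqdef
  clear_value q
  have hq0 : 0 < q := by rw [hqdef]; linarith
  set C3 : ℝ := ∫ ν in (a+q)..(b-q), ‖iteratedDeriv 2 F ν‖ with hC3def
  clear_value C3
  have hqb : 4*q = b - a := by rw [hqdef, hLdef]; ring
  have haqbq : a + q ≤ b - q := by linarith
  have hC30 : 0 ≤ C3 := by
    rw [hC3def]
    exact intervalIntegral.integral_nonneg haqbq (fun ν _ => norm_nonneg _)
  refine ⟨(Ca+Cb)*q^(p+1) + (Ca+Cb)*q^p + 2*((Ca+Cb)*q^(p-1)) + C3, ?_⟩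
  intro t ht
  have ht0 : (0:ℝ) < t := by linarith
  set T : ℝ := t ^ (-(1+p)) with hTdef
  clear_value T
  have hT0 : 0 ≤ T := by rw [hTdef]; exact Real.rpow_nonneg ht0.le _
  set δ : ℝ := q / t with hδdef
  clear_value δ
  have hδ0 : 0 < δ := by rw [hδdef]; exact div_pos hq0 ht0
  have hδq : δ ≤ q := by rw [hδdef]; exact div_le_self hq0.le ht
  have ho1 : a < a + δ := by linarith
  have ho5 : a + δ ≤ b - δ := by linarith
  have ho4 : b - δ < b := by linarith
  have hmema : a + δ ∈ Set.Icc a b := ⟨by linarith, by linarith⟩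
  have hmemb : b - δ ∈ Set.Icc a b := ⟨by linarith, by linarith⟩
  have hmemA : a ∈ Set.Icc a b := ⟨le_rfl, hab.le⟩
  have hmemB : b ∈ Set.Icc a b := ⟨hab.le, le_rfl⟩
  have hsubIoo : Set.Icc (a+δ) (b-δ) ⊆ Set.Ioo a b :=
    fun ν hν => ⟨by linarith [hν.1], by linarith [hν.2]⟩
  -- pointwise bounds from the helpers
  obtain ⟨hFa1', hFa2', hFa3'⟩ := hCa δ ⟨hδ0, hδq⟩
  obtain ⟨hFb1', hFb2', hFb3'⟩ := hCb δ ⟨hδ0, hδq⟩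
  have hFa1 : ‖F (a + δ)‖ ≤ Ca * δ ^ p := hFa1'
  have hFa2 : ‖deriv F (a + δ)‖ ≤ Ca * δ ^ (p-1) := hFa2'
  have hFa3 : (∫ s in δ..q, ‖iteratedDeriv 2 F (a + s)‖) ≤ Ca * δ ^ (p-1) := hFa3'
  have hFb1 : ‖F (b - δ)‖ ≤ Cb * δ ^ p := hFb1'
  have hFb2 : ‖deriv F (b - δ)‖ ≤ Cb * δ ^ (p-1) := by
    simpa using hFb2'
  have hFb3 : (∫ s in δ..q, ‖iteratedDeriv 2 F (b - s)‖) ≤ Cb * δ ^ (p-1) := hFb3'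
  -- the oscillating factor
  set c : ℂ := -(t:ℂ) * Complex.I with hcdef
  clear_value c
  have hcnorm : ‖c‖ = t := by
    rw [hcdef, norm_mul, norm_neg, Complex.norm_I, mul_one, Complex.norm_real,
      Real.norm_eq_abs, abs_of_pos ht0]
  have hc0 : c ≠ 0 := by
    intro h; rw [h, norm_zero] at hcnorm; linarith
  have hexpnorm : ∀ ν : ℝ, ‖Complex.exp (c * ↑ν)‖ = 1 := by
    intro ν
    rw [Complex.norm_exp]
    simp [hcdef, Complex.mul_re, Complex.mul_im, Real.exp_zero]
  have hEeq : ∀ ν : ℝ, Complex.exp (-(t * ν) * Complex.I) = Complex.exp (c * ↑ν) := by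
    intro ν; rw [hcdef]; congr 1; ring
  have hgoaleq : (∫ ν in a..b, Complex.exp (-(t * ν) * Complex.I) • F ν)
      = ∫ ν in a..b, Complex.exp (c * ↑ν) • F ν :=
    intervalIntegral.integral_congr (fun ν _ => by rw [hEeq ν])
  rw [hgoaleq]
  -- integrability of the integrand
  have hEcont : Continuous fun ν : ℝ => Complex.exp (c * ↑ν) :=
    Complex.continuous_exp.comp (continuous_const.mul Complex.continuous_ofReal)
  have hfc : ContinuousOn (fun ν => Complex.exp (c * ↑ν) • F ν) (Set.Icc a b) :=
    hEcont.continuousOn.smul hcont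
  have hfint : ∀ x y, x ∈ Set.Icc a b → y ∈ Set.Icc a b →
      IntervalIntegrable (fun ν => Complex.exp (c * ↑ν) • F ν) MeasureTheory.volume x y := by
    intro x y hx hy
    exact (hfc.mono (Set.uIcc_subset_Icc hx hy)).intervalIntegrable
  have hsplit : (∫ ν in a..b, Complex.exp (c * ↑ν) • F ν) =
      (∫ ν in a..(a+δ), Complex.exp (c * ↑ν) • F ν)
        + (∫ ν in (a+δ)..(b-δ), Complex.exp (c * ↑ν) • F ν)
        + (∫ ν in (b-δ)..b, Complex.exp (c * ↑ν) • F ν) := by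
    have e1 := intervalIntegral.integral_add_adjacent_intervals
      (hfint _ _ hmemA hmema) (hfint _ _ hmema hmemB)
    have e2 := intervalIntegral.integral_add_adjacent_intervals
      (hfint _ _ hmema hmemb) (hfint _ _ hmemb hmemB)
    rw [← e1, ← e2, add_assoc]
  have hFnorm : ∀ ν : ℝ, ‖Complex.exp (c * ↑ν) • F ν‖ = ‖F ν‖ := by
    intro ν; rw [norm_smul, hexpnorm, one_mul]
  -- edge A
  have hboundA : ∀ ν ∈ Set.Icc a (a+δ), ‖Complex.exp (c * ↑ν) • F ν‖ ≤ Ca * (ν - a) ^ p := by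
    intro ν hν
    rw [hFnorm]
    rcases eq_or_lt_of_le hν.1 with he | hlt
    · rw [← he, hFa, norm_zero]
      exact mul_nonneg hCa0 (Real.rpow_nonneg (by linarith) _)
    · have h := (hCa (ν - a) ⟨by linarith, by linarith [hν.2, hδq]⟩).1
      rwa [show a + (ν - a) = ν from by ring] at h
  have hedgeA : ‖∫ ν in a..(a+δ), Complex.exp (c * ↑ν) • F ν‖ ≤ Ca * (δ ^ (p+1) / (p+1)) := by
    refine (intervalIntegral.norm_integral_le_integral_norm (by linarith)).trans ?_
    have hi1 : IntervalIntegrable (fun ν => ‖Complex.exp (c * ↑ν) • F ν‖)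
        MeasureTheory.volume a (a+δ) := (hfint _ _ hmemA hmema).norm
    have hi2 : IntervalIntegrable (fun ν => Ca * (ν - a) ^ p) MeasureTheory.volume a (a+δ) := by
      apply ContinuousOn.intervalIntegrable
      exact continuousOn_const.mul ((continuousOn_id.sub continuousOn_const).rpow_const
        (fun ν _ => Or.inr hp0.le))
    refine (intervalIntegral.integral_mono_on (by linarith) hi1 hi2 hboundA).trans_eq ?_
    rw [intervalIntegral.integral_const_mul]
    congr 1
    rw [intervalIntegral.integral_comp_sub_right (fun s => s ^ p) a]
    simp only [sub_self, add_sub_cancel_left]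
    rw [integral_rpow (Or.inl (by linarith)),
      Real.zero_rpow (ne_of_gt (by linarith : (0:ℝ) < p + 1)), sub_zero]
  -- edge B
  have hboundB : ∀ ν ∈ Set.Icc (b-δ) b, ‖Complex.exp (c * ↑ν) • F ν‖ ≤ Cb * (b - ν) ^ p := by
    intro ν hν
    rw [hFnorm]
    rcases eq_or_lt_of_le hν.2 with he | hlt
    · rw [he, hFb, norm_zero]
      exact mul_nonneg hCb0 (Real.rpow_nonneg (by linarith) _)
    · have h := (hCb (b - ν) ⟨by linarith, by linarith [hν.1, hδq]⟩).1
      rwa [show b - (b - ν) = ν from by ring] at h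
  have hedgeB : ‖∫ ν in (b-δ)..b, Complex.exp (c * ↑ν) • F ν‖ ≤ Cb * (δ ^ (p+1) / (p+1)) := by
    refine (intervalIntegral.norm_integral_le_integral_norm (by linarith)).trans ?_
    have hi1 : IntervalIntegrable (fun ν => ‖Complex.exp (c * ↑ν) • F ν‖)
        MeasureTheory.volume (b-δ) b := (hfint _ _ hmemb hmemB).norm
    have hi2 : IntervalIntegrable (fun ν => Cb * (b - ν) ^ p) MeasureTheory.volume (b-δ) b := by
      apply ContinuousOn.intervalIntegrable
      exact continuousOn_const.mul ((continuousOn_const.sub continuousOn_id).rpow_const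
        (fun ν _ => Or.inr hp0.le))
    refine (intervalIntegral.integral_mono_on (by linarith) hi1 hi2 hboundB).trans_eq ?_
    rw [intervalIntegral.integral_const_mul]
    congr 1
    rw [intervalIntegral.integral_comp_sub_left (fun s => s ^ p) b]
    simp only [sub_self, sub_sub_cancel]
    rw [integral_rpow (Or.inl (by linarith)),
      Real.zero_rpow (ne_of_gt (by linarith : (0:ℝ) < p + 1)), sub_zero]
  -- middle : integration by parts via an explicit antiderivative
  have hexpd : ∀ ν : ℝ, HasDerivAt (fun s : ℝ => Complex.exp (c * ↑s))
      (c * Complex.exp (c * ↑ν)) ν := by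
    intro ν
    have h1 : HasDerivAt (fun s : ℝ => (s : ℂ)) 1 ν := by
      simpa using (hasDerivAt_id ν).ofReal_comp
    have h3 := (h1.const_mul c).cexp
    simpa [mul_comm] using h3
  obtain ⟨u1, hu1def⟩ : ∃ u1 : ℝ → ℂ, u1 = fun ν : ℝ => c⁻¹ * Complex.exp (c * ν) := ⟨_, rfl⟩
  obtain ⟨u2, hu2def⟩ : ∃ u2 : ℝ → ℂ, u2 = fun ν : ℝ => c⁻¹ * (c⁻¹ * Complex.exp (c * ν)) := ⟨_, rfl⟩
  have hu1d : ∀ ν : ℝ, HasDerivAt u1 (Complex.exp (c * ↑ν)) ν := by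
    intro ν
    rw [hu1def]
    have h := (hexpd ν).const_mul c⁻¹
    simpa [← mul_assoc, inv_mul_cancel₀ hc0] using h
  have hu2d : ∀ ν : ℝ, HasDerivAt u2 (u1 ν) ν := by
    intro ν
    rw [hu2def, hu1def]
    have h := ((hexpd ν).const_mul c⁻¹).const_mul c⁻¹
    rw [inv_mul_cancel_left₀ hc0] at h
    exact h
  have hu1n : ∀ ν : ℝ, ‖u1 ν‖ = t⁻¹ := by
    intro ν
    simp only [hu1def]
    rw [norm_mul, norm_inv, hcnorm, hexpnorm, mul_one]
  have hu2n : ∀ ν : ℝ, ‖u2 ν‖ = t⁻¹ * t⁻¹ := by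
    intro ν
    simp only [hu2def]
    have h1 := hu1n ν
    simp only [hu1def] at h1
    rw [norm_mul, norm_inv, hcnorm, h1]
  obtain ⟨w, hwdef⟩ : ∃ w : ℝ → B, w = fun ν => u1 ν • F ν - u2 ν • deriv F ν := ⟨_, rfl⟩
  have hw : ∀ ν ∈ Set.Icc (a+δ) (b-δ),
      HasDerivAt w (Complex.exp (c * ↑ν) • F ν - u2 ν • iteratedDeriv 2 F ν) ν := by
    intro ν hν
    have hν' := hsubIoo hν
    have h1 := (hu1d ν).smul (hd1 ν hν')
    have h2 := (hu2d ν).smul (hd2 ν hν')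
    have h3 := h1.sub h2
    rw [hwdef]
    convert h3 using 1
    · rfl
    abel
  have hmidcontF : ContinuousOn F (Set.Icc (a+δ) (b-δ)) :=
    hcont.mono (Set.Icc_subset_Icc (by linarith) (by linarith))
  have hi_f : IntervalIntegrable (fun ν => Complex.exp (c * ↑ν) • F ν)
      MeasureTheory.volume (a+δ) (b-δ) := hfint _ _ hmema hmemb
  have hu2cont : Continuous u2 := by
    rw [hu2def]
    exact continuous_const.mul (continuous_const.mul hEcont)
  have hi_g : IntervalIntegrable (fun ν => u2 ν • iteratedDeriv 2 F ν)
      MeasureTheory.volume (a+δ) (b-δ) := by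
    apply ContinuousOn.intervalIntegrable
    rw [Set.uIcc_of_le ho5]
    exact hu2cont.continuousOn.smul (hc2.mono hsubIoo)
  have hFTC : (∫ ν in (a+δ)..(b-δ),
      (Complex.exp (c * ↑ν) • F ν - u2 ν • iteratedDeriv 2 F ν)) = w (b-δ) - w (a+δ) := by
    apply intervalIntegral.integral_eq_sub_of_hasDerivAt
    · intro ν hν
      rw [Set.uIcc_of_le ho5] at hν
      exact hw ν hν
    · exact hi_f.sub hi_g
  have hmid_eq : (∫ ν in (a+δ)..(b-δ), Complex.exp (c * ↑ν) • F ν)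
      = w (b-δ) - w (a+δ) + ∫ ν in (a+δ)..(b-δ), u2 ν • iteratedDeriv 2 F ν := by
    rw [intervalIntegral.integral_sub hi_f hi_g] at hFTC
    exact sub_eq_iff_eq_add.mp hFTC
  -- bounds for the boundary terms
  have ht1nn : (0:ℝ) ≤ t⁻¹ := by positivity
  have hwa : ‖w (a+δ)‖ ≤ Ca * (t⁻¹ * δ^p) + Ca * ((t⁻¹*t⁻¹) * δ^(p-1)) := by
    have hwx : w (a+δ) = u1 (a+δ) • F (a+δ) - u2 (a+δ) • deriv F (a+δ) := by rw [hwdef]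
    rw [hwx]
    refine (norm_sub_le (u1 (a+δ) • F (a+δ)) (u2 (a+δ) • deriv F (a+δ))).trans ?_
    rw [norm_smul, norm_smul, hu1n, hu2n]
    calc t⁻¹ * ‖F (a+δ)‖ + t⁻¹*t⁻¹ * ‖deriv F (a+δ)‖
        ≤ t⁻¹ * (Ca * δ^p) + t⁻¹*t⁻¹ * (Ca * δ^(p-1)) :=
          add_le_add (mul_le_mul_of_nonneg_left hFa1 ht1nn)
            (mul_le_mul_of_nonneg_left hFa2 (mul_nonneg ht1nn ht1nn))
      _ = Ca * (t⁻¹ * δ^p) + Ca * ((t⁻¹*t⁻¹) * δ^(p-1)) := by ring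
  have hwb : ‖w (b-δ)‖ ≤ Cb * (t⁻¹ * δ^p) + Cb * ((t⁻¹*t⁻¹) * δ^(p-1)) := by
    have hwx : w (b-δ) = u1 (b-δ) • F (b-δ) - u2 (b-δ) • deriv F (b-δ) := by rw [hwdef]
    rw [hwx]
    refine (norm_sub_le (u1 (b-δ) • F (b-δ)) (u2 (b-δ) • deriv F (b-δ))).trans ?_
    rw [norm_smul, norm_smul, hu1n, hu2n]
    calc t⁻¹ * ‖F (b-δ)‖ + t⁻¹*t⁻¹ * ‖deriv F (b-δ)‖
        ≤ t⁻¹ * (Cb * δ^p) + t⁻¹*t⁻¹ * (Cb * δ^(p-1)) :=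
          add_le_add (mul_le_mul_of_nonneg_left hFb1 ht1nn)
            (mul_le_mul_of_nonneg_left hFb2 (mul_nonneg ht1nn ht1nn))
      _ = Cb * (t⁻¹ * δ^p) + Cb * ((t⁻¹*t⁻¹) * δ^(p-1)) := by ring
  -- bound for the F'' integral
  have hFppint : ∀ x y, x ∈ Set.Icc (a+δ) (b-δ) → y ∈ Set.Icc (a+δ) (b-δ) →
      IntervalIntegrable (fun ν => ‖iteratedDeriv 2 F ν‖) MeasureTheory.volume x y := by
    intro x y hx hy
    apply ContinuousOn.intervalIntegrable
    exact ((hc2.mono hsubIoo).mono (Set.uIcc_subset_Icc hx hy)).norm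
  have hmm1 : a + q ∈ Set.Icc (a+δ) (b-δ) := ⟨by linarith, by linarith⟩
  have hmm2 : b - q ∈ Set.Icc (a+δ) (b-δ) := ⟨by linarith, by linarith⟩
  have hmmA : a + δ ∈ Set.Icc (a+δ) (b-δ) := ⟨le_rfl, ho5⟩
  have hmmB : b - δ ∈ Set.Icc (a+δ) (b-δ) := ⟨ho5, le_rfl⟩
  have hsplit2 : (∫ ν in (a+δ)..(b-δ), ‖iteratedDeriv 2 F ν‖)
      = (∫ ν in (a+δ)..(a+q), ‖iteratedDeriv 2 F ν‖) + C3
        + (∫ ν in (b-q)..(b-δ), ‖iteratedDeriv 2 F ν‖) := by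
    rw [hC3def]
    have e1 := intervalIntegral.integral_add_adjacent_intervals
      (hFppint _ _ hmmA hmm1) (hFppint _ _ hmm1 hmmB)
    have e2 := intervalIntegral.integral_add_adjacent_intervals
      (hFppint _ _ hmm1 hmm2) (hFppint _ _ hmm2 hmmB)
    rw [← e1, ← e2, add_assoc]
  have hIa : (∫ ν in (a+δ)..(a+q), ‖iteratedDeriv 2 F ν‖) ≤ Ca * δ^(p-1) := by
    have hoc := intervalIntegral.integral_comp_add_left
      (fun ν => ‖iteratedDeriv 2 F ν‖) a (a := δ) (b := q)
    rw [← hoc]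
    exact hFa3
  have hIc : (∫ ν in (b-q)..(b-δ), ‖iteratedDeriv 2 F ν‖) ≤ Cb * δ^(p-1) := by
    have hoc := intervalIntegral.integral_comp_sub_left
      (fun ν => ‖iteratedDeriv 2 F ν‖) b (a := δ) (b := q)
    rw [← hoc]
    exact hFb3
  have hmidF : ‖∫ ν in (a+δ)..(b-δ), u2 ν • iteratedDeriv 2 F ν‖
      ≤ (t⁻¹*t⁻¹) * (Ca*δ^(p-1) + C3 + Cb*δ^(p-1)) := by
    refine (intervalIntegral.norm_integral_le_integral_norm ho5).trans ?_
    have heq : (∫ ν in (a+δ)..(b-δ), ‖u2 ν • iteratedDeriv 2 F ν‖)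
        = (t⁻¹*t⁻¹) * ∫ ν in (a+δ)..(b-δ), ‖iteratedDeriv 2 F ν‖ := by
      rw [← intervalIntegral.integral_const_mul]
      apply intervalIntegral.integral_congr
      intro ν _
      show ‖u2 ν • iteratedDeriv 2 F ν‖ = (t⁻¹*t⁻¹) * ‖iteratedDeriv 2 F ν‖
      rw [norm_smul, hu2n]
    rw [heq, hsplit2]
    apply mul_le_mul_of_nonneg_left _ (by positivity)
    linarith
  have hmidbound : ‖∫ ν in (a+δ)..(b-δ), Complex.exp (c * ↑ν) • F ν‖
      ≤ (Ca+Cb) * (t⁻¹ * δ^p) + (Ca+Cb) * ((t⁻¹*t⁻¹) * δ^(p-1))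
        + (t⁻¹*t⁻¹) * (Ca*δ^(p-1) + C3 + Cb*δ^(p-1)) := by
    rw [hmid_eq]
    refine (norm_add_le _ _).trans ?_
    have h1 : ‖w (b-δ) - w (a+δ)‖ ≤ ‖w (b-δ)‖ + ‖w (a+δ)‖ := norm_sub_le _ _
    linarith [hwa, hwb, hmidF]
  -- power arithmetic
  have hbase : ∀ r : ℝ, δ ^ r = q ^ r * t ^ (-r) := by
    intro r
    rw [hδdef, div_eq_mul_inv, Real.mul_rpow hq0.le (inv_nonneg.2 ht0.le),
      Real.inv_rpow ht0.le, ← Real.rpow_neg ht0.le]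
  have ht1 : t⁻¹ = t ^ (-1 : ℝ) := (Real.rpow_neg_one t).symm
  have hA1 : t⁻¹ * δ^p = q^p * T := by
    rw [hbase p, ht1, hTdef,
      show t ^ (-1:ℝ) * (q^p * t^(-p)) = q^p * (t ^ (-1:ℝ) * t^(-p)) from by ring,
      ← Real.rpow_add ht0, show (-1) + (-p) = -(1+p) from by ring]
  have hA2 : (t⁻¹*t⁻¹) * δ^(p-1) = q^(p-1) * T := by
    rw [hbase (p-1), ht1, hTdef,
      show t ^ (-1:ℝ) * t ^ (-1:ℝ) * (q^(p-1) * t^(-(p-1)))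
        = q^(p-1) * (t ^ (-1:ℝ) * (t ^ (-1:ℝ) * t^(-(p-1)))) from by ring,
      ← Real.rpow_add ht0, ← Real.rpow_add ht0,
      show (-1) + ((-1) + -(p-1)) = -(1+p) from by ring]
  have hA3 : δ^(p+1) = q^(p+1) * T := by
    rw [hbase (p+1), hTdef, show -(p+1) = -(1+p) from by ring]
  have hA4 : t⁻¹*t⁻¹ ≤ T := by
    rw [ht1, ← Real.rpow_add ht0, hTdef]
    exact Real.rpow_le_rpow_of_exponent_le ht (by linarith)
  have hdd : δ^(p+1)/(p+1) ≤ q^(p+1) * T := by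
    calc δ^(p+1)/(p+1) ≤ δ^(p+1) := div_le_self (by positivity) (by linarith)
      _ = q^(p+1) * T := hA3
  -- assemble
  rw [hsplit]
  calc ‖(∫ ν in a..(a+δ), Complex.exp (c * ↑ν) • F ν)
        + (∫ ν in (a+δ)..(b-δ), Complex.exp (c * ↑ν) • F ν)
        + (∫ ν in (b-δ)..b, Complex.exp (c * ↑ν) • F ν)‖
      ≤ ‖∫ ν in a..(a+δ), Complex.exp (c * ↑ν) • F ν‖
        + ‖∫ ν in (a+δ)..(b-δ), Complex.exp (c * ↑ν) • F ν‖
        + ‖∫ ν in (b-δ)..b, Complex.exp (c * ↑ν) • F ν‖ := norm_add₃_le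
    _ ≤ Ca * (δ ^ (p+1) / (p+1))
        + ((Ca+Cb) * (t⁻¹ * δ^p) + (Ca+Cb) * ((t⁻¹*t⁻¹) * δ^(p-1))
          + (t⁻¹*t⁻¹) * (Ca*δ^(p-1) + C3 + Cb*δ^(p-1)))
        + Cb * (δ ^ (p+1) / (p+1)) := by
        exact add_le_add (add_le_add hedgeA hmidbound) hedgeB
    _ ≤ ((Ca+Cb)*q^(p+1) + (Ca+Cb)*q^p + 2*((Ca+Cb)*q^(p-1)) + C3) * T := by
        have expand : Ca * (δ ^ (p+1) / (p+1))
            + ((Ca+Cb) * (t⁻¹ * δ^p) + (Ca+Cb) * ((t⁻¹*t⁻¹) * δ^(p-1))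
              + (t⁻¹*t⁻¹) * (Ca*δ^(p-1) + C3 + Cb*δ^(p-1)))
            + Cb * (δ ^ (p+1) / (p+1))
            = (Ca+Cb) * (δ^(p+1)/(p+1)) + (Ca+Cb) * (t⁻¹ * δ^p)
              + (Ca+Cb) * ((t⁻¹*t⁻¹) * δ^(p-1))
              + (Ca * ((t⁻¹*t⁻¹) * δ^(p-1)) + Cb * ((t⁻¹*t⁻¹) * δ^(p-1))
                + C3 * (t⁻¹*t⁻¹)) := by ring
        rw [expand, hA1, hA2]
        have h1 : (Ca+Cb) * (δ^(p+1)/(p+1)) ≤ (Ca+Cb) * (q^(p+1)*T) :=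
          mul_le_mul_of_nonneg_left hdd (by positivity)
        have h3 : C3 * (t⁻¹*t⁻¹) ≤ C3 * T := mul_le_mul_of_nonneg_left hA4 hC30
        have hMexp : ((Ca+Cb)*q^(p+1) + (Ca+Cb)*q^p + 2*((Ca+Cb)*q^(p-1)) + C3) * T
            = (Ca+Cb) * (q^(p+1)*T) + (Ca+Cb) * (q^p*T) + (Ca+Cb) * (q^(p-1)*T)
              + ((Ca+Cb) * (q^(p-1)*T) + C3 * T) := by ring
        have hsplitCC : (Ca+Cb) * (q^(p-1)*T) = Ca * (q^(p-1)*T) + Cb * (q^(p-1)*T) := by ring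
        rw [hMexp, hsplitCC]
        linarith [h1, h3]
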